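/- Suppose a DCCD(v,k,b) with t = 2 admits an expansion set of size l = v/(k-2), where v is an odd multiple of k-2. Then inserting, at each expansion location i_j, the (l+1)/2 blocks U_{i_j} ∪ e for e ranging over the edges of the j-th 1-factor of a 1-factorization {F_1,...,F_l} of K_{l+1} on a new point set X, yields a DCCD(v*, k, b*) with v* = v + v/(k-2) + 1 and b* = b + (v/(k-2))·((v+k-2)/(2k-4)). If the original design is tight (every pair covered exactly once), circular, or economical, so is the new one. -/
import Mathlib

/-- A (linear) double change covering design `DCCD(v,k,b)` with strength `t = 2`. -/
structure DCCD (v k b : ℕ) where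
  B : ℕ → Finset (Fin v)
  hb : 1 ≤ b
  card_block : ∀ i < b, (B i).card = k
  double_change : ∀ i, i + 1 < b → (B i ∩ B (i + 1)).card = k - 2
  cover : ∀ T : Finset (Fin v), T.card = 2 → ∃ i < b, T ⊆ B i

/-- A `DCCD` is circular when the first and last blocks also differ in exactly two
elements. -/
def DCCD.IsCircular {v k b : ℕ} (D : DCCD v k b) : Prop :=
  (D.B (b - 1) ∩ D.B 0).card = k - 2

/-- A pair `T` is covered at block `i` when `T ⊆ Bᵢ` and some element of `T` is
introduced at `i` (i.e. `i = 0` or that element is absent from the previous block). -/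
def DCCD.CoveredAt {v k b : ℕ} (D : DCCD v k b) (T : Finset (Fin v)) (i : ℕ) : Prop :=
  i < b ∧ T ⊆ D.B i ∧ ∃ x ∈ T, i = 0 ∨ x ∉ D.B (i - 1)

/-- Tight: every pair is covered exactly once. -/
def DCCD.IsTight {v k b : ℕ} (D : DCCD v k b) : Prop :=
  ∀ T : Finset (Fin v), T.card = 2 → ∃! i, D.CoveredAt T i

/-- Economical: the number of blocks meets the lower bound
`⌈(C(v,2) - C(k,2))/(2k-3)⌉ + 1`. -/
def DCCD.IsEconomical {v k b : ℕ} (_ : DCCD v k b) : Prop :=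
  b = (Nat.choose v 2 - Nat.choose k 2 + (2 * k - 3) - 1) / (2 * k - 3) + 1

namespace ESR

/-! ### A 1-factorization of the complete graph on `Option (ZMod l)`, `l` odd. -/

def m (l : ℕ) : ℕ := (l + 1) / 2

def edge (l : ℕ) (j : ZMod l) (r : ℕ) : Finset (Option (ZMod l)) :=
  if r = 0 then {none, some j} else {some (j + (r : ZMod l)), some (j - (r : ZMod l))}

def ridx {l : ℕ} [NeZero l] (j : ZMod l) : Option (ZMod l) → ℕ
  | none => 0
  | some a => min (a - j).val (l - (a - j).val)

variable {l : ℕ}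

theorem two_mul_m (hodd : Odd l) : 2 * m l = l + 1 := by
  obtain ⟨t, rfl⟩ := hodd; simp [m]; omega

theorem eq_add_val [NeZero l] (a j : ZMod l) : a = j + ((a - j).val : ZMod l) := by
  rw [ZMod.natCast_zmod_val]; ring

theorem cast_sub_eq_neg [NeZero l] {r : ℕ} (h2 : r < l) :
    ((l - r : ℕ) : ZMod l) = -(r : ZMod l) := by
  have : ((l - r : ℕ) : ZMod l) = (l : ZMod l) - (r : ZMod l) := by
    push_cast [Nat.cast_sub h2.le]; ring
  simp [this, ZMod.natCast_self]

theorem edge_card (hodd : Odd l) (j : ZMod l) {r : ℕ} (hr : r < m l) :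
    (edge l j r).card = 2 := by
  haveI : NeZero l := ⟨by obtain ⟨t, rfl⟩ := hodd; omega⟩
  have hm := two_mul_m hodd
  rcases Nat.eq_zero_or_pos r with h0 | h1
  · subst h0; simp [edge]
  · have hrl : r < l := by omega
    have hne : j + (r : ZMod l) ≠ j - (r : ZMod l) := by
      intro h
      have : ((2 * r : ℕ) : ZMod l) = 0 := by push_cast; linear_combination h
      rw [ZMod.natCast_eq_zero_iff] at this
      have := Nat.le_of_dvd (by omega) this
      omega
    have hr0 : r ≠ 0 := by omega
    rw [edge, if_neg hr0, Finset.card_insert_of_notMem (by simpa using hne),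
      Finset.card_singleton]

theorem ridx_lt (hodd : Odd l) [NeZero l] (j : ZMod l) (o : Option (ZMod l)) :
    ridx j o < m l := by
  obtain ⟨t, hl⟩ := hodd
  have hm := two_mul_m ⟨t, hl⟩
  cases o with
  | none => simp [ridx]; omega
  | some a =>
    have hd : (a - j).val < l := ZMod.val_lt _
    simp only [ridx]
    omega

theorem mem_edge_ridx [NeZero l] (j : ZMod l) (o : Option (ZMod l)) :
    o ∈ edge l j (ridx j o) := by
  cases o with
  | none => simp [ridx, edge]
  | some a =>
    have hd : (a - j).val < l := ZMod.val_lt _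
    have ha : a = j + ((a - j).val : ZMod l) := eq_add_val a j
    set d := (a - j).val with hdd
    by_cases h0 : d = 0
    · have : a = j := by rw [ha, h0]; simp
      simp [ridx, ← hdd, h0, edge, this]
    · simp only [ridx, ← hdd]
      rcases le_total d (l - d) with hle | hle
      · have : min d (l - d) = d := by omega
        rw [this, edge, if_neg h0]
        simp [← ha]
      · have hmin : min d (l - d) = l - d := by omega
        have hne : l - d ≠ 0 := by omega
        rw [hmin, edge, if_neg hne]
        have : j - ((l - d : ℕ) : ZMod l) = a := by
          rw [cast_sub_eq_neg hd, ha]; ring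
        simp [this]

theorem eq_ridx_of_mem (hodd : Odd l) [NeZero l] {j : ZMod l} {o : Option (ZMod l)} {r : ℕ}
    (hr : r < m l) (h : o ∈ edge l j r) : r = ridx j o := by
  obtain ⟨t, hl⟩ := hodd
  have hm := two_mul_m ⟨t, hl⟩
  rcases Nat.eq_zero_or_pos r with h0 | h1
  · subst h0
    rw [edge, if_pos rfl] at h
    simp only [Finset.mem_insert, Finset.mem_singleton] at h
    rcases h with rfl | rfl
    · simp [ridx]
    · simp [ridx]
  · have hr0 : r ≠ 0 := by omega
    have hrl : r < l := by omega
    rw [edge, if_neg hr0] at h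
    simp only [Finset.mem_insert, Finset.mem_singleton] at h
    rcases h with rfl | rfl
    · simp only [ridx, add_sub_cancel_left]
      rw [ZMod.val_cast_of_lt hrl]
      omega
    · simp only [ridx]
      have : j - (r : ZMod l) - j = ((l - r : ℕ) : ZMod l) := by
        rw [cast_sub_eq_neg hrl]; ring
      rw [this, ZMod.val_cast_of_lt (by omega)]
      omega

theorem none_mem_edge {j : ZMod l} {r : ℕ} (h : none ∈ edge l j r) : r = 0 := by
  by_contra h0
  rw [edge, if_neg h0] at h
  simp at h

theorem some_mem_edge_zero {j a : ZMod l} (h : some a ∈ edge l j 0) : a = j := by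
  rw [edge, if_pos rfl] at h; simpa using h

theorem mem_edge_elim {j : ZMod l} {r : ℕ} (hr0 : r ≠ 0) {a : ZMod l}
    (h : some a ∈ edge l j r) : a = j + (r : ZMod l) ∨ a = j - (r : ZMod l) := by
  rw [edge, if_neg hr0] at h; simpa using h

theorem two_mul_hf (hodd : Odd l) : (2 : ZMod l) * ((m l : ℕ) : ZMod l) = 1 := by
  have hm := two_mul_m hodd
  have : (((2 * m l : ℕ)) : ZMod l) = ((l + 1 : ℕ) : ZMod l) := by rw [hm]
  push_cast at this
  simpa [ZMod.natCast_self] using this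

theorem factor_eq {j : ZMod l} {r : ℕ} (hr0 : r ≠ 0) {a b : ZMod l}
    (ha : some a ∈ edge l j r) (hb : some b ∈ edge l j r) (hab : a ≠ b) :
    a + b = 2 * j ∧ b - j = -(a - j) := by
  rcases mem_edge_elim hr0 ha with rfl | rfl <;>
    rcases mem_edge_elim hr0 hb with h | h <;>
      first
        | (exact absurd h.symm hab)
        | (subst h; constructor <;> ring)

theorem j_of_sum (hodd : Odd l) {j j' : ZMod l} (h : 2 * j = 2 * j') : j = j' := by
  have hf := two_mul_hf hodd
  calc j = (2 * ((m l : ℕ) : ZMod l)) * j := by rw [hf]; ring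
    _ = ((m l : ℕ) : ZMod l) * (2 * j) := by ring
    _ = ((m l : ℕ) : ZMod l) * (2 * j') := by rw [h]
    _ = (2 * ((m l : ℕ) : ZMod l)) * j' := by ring
    _ = j' := by rw [hf]; ring

theorem pair_unique (hodd : Odd l) [NeZero l] {o o' : Option (ZMod l)} (hne : o ≠ o') :
    ∃! x : ZMod l × ℕ, x.2 < m l ∧ o ∈ edge l x.1 x.2 ∧ o' ∈ edge l x.1 x.2 := by
  have key : ∀ a : ZMod l, ∃! x : ZMod l × ℕ,
      x.2 < m l ∧ none ∈ edge l x.1 x.2 ∧ some a ∈ edge l x.1 x.2 := by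
    intro a
    refine ⟨(a, 0), ⟨by have := two_mul_m hodd; simp [m]; omega, by simp [edge], by simp [edge]⟩, ?_⟩
    rintro ⟨j, r⟩ ⟨hr, hn, hs⟩
    obtain rfl := none_mem_edge hn
    obtain rfl := some_mem_edge_zero hs
    rfl
  match o, o' with
  | none, none => exact absurd rfl hne
  | none, some a =>
      obtain ⟨x, hx, hu⟩ := key a
      exact ⟨x, ⟨hx.1, hx.2.1, hx.2.2⟩, fun y hy => hu y ⟨hy.1, hy.2.1, hy.2.2⟩⟩
  | some a, none =>
      obtain ⟨x, hx, hu⟩ := key a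
      exact ⟨x, ⟨hx.1, hx.2.2, hx.2.1⟩, fun y hy => hu y ⟨hy.1, hy.2.2, hy.2.1⟩⟩
  | some a, some b =>
      have hab : a ≠ b := by simpa using hne
      set j₀ : ZMod l := ((m l : ℕ) : ZMod l) * (a + b) with hj₀
      have h2j : 2 * j₀ = a + b := by
        calc 2 * j₀ = (2 * ((m l : ℕ) : ZMod l)) * (a + b) := by rw [hj₀]; ring
          _ = a + b := by rw [two_mul_hf hodd]; ring
      set r₀ : ℕ := ridx j₀ (some a) with hr₀
      have hr₀m : r₀ < m l := ridx_lt hodd j₀ (some a)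
      have hamem : some a ∈ edge l j₀ r₀ := mem_edge_ridx j₀ (some a)
      have hr00 : r₀ ≠ 0 := by
        intro h0
        rw [h0] at hamem
        have heq := some_mem_edge_zero hamem
        apply hab
        have h3 : a + a = a + b := by rw [← h2j, ← heq]; ring
        exact (add_left_cancel h3)
      have hbj : b = 2 * j₀ - a := by rw [h2j]; ring
      have hbmem : some b ∈ edge l j₀ r₀ := by
        rcases mem_edge_elim hr00 hamem with h | h
        · have : b = j₀ - (r₀ : ZMod l) := by rw [hbj, h]; ring
          rw [edge, if_neg hr00]; simp [this]
        · have : b = j₀ + (r₀ : ZMod l) := by rw [hbj, h]; ring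
          rw [edge, if_neg hr00]; simp [this]
      refine ⟨(j₀, r₀), ⟨hr₀m, hamem, hbmem⟩, ?_⟩
      rintro ⟨j, r⟩ ⟨hr, haj, hbj'⟩
      have hr0 : r ≠ 0 := by
        intro h0
        rw [h0] at haj hbj'
        exact hab ((some_mem_edge_zero haj).trans (some_mem_edge_zero hbj').symm)
      obtain ⟨hsum, -⟩ := factor_eq hr0 haj hbj' hab
      have hj : j = j₀ := j_of_sum hodd (by rw [h2j, ← hsum])
      subst hj
      have : r = r₀ := by rw [hr₀]; exact eq_ridx_of_mem hodd hr haj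
      simp [this]

/-! ### Position bookkeeping for the insertion of blocks. -/

def cnt (idx : Fin l → ℕ) (i : ℕ) : ℕ := (Finset.univ.filter fun j => idx j < i).card

def pos (idx : Fin l → ℕ) (i : ℕ) : ℕ := i + m l * cnt idx i

theorem cnt_mono' (idx : Fin l → ℕ) {i i' : ℕ} (h : i ≤ i') : cnt idx i ≤ cnt idx i' := by
  apply Finset.card_le_card
  intro j hj
  simp only [Finset.mem_filter, Finset.mem_univ, true_and] at *
  omega

theorem pos_strictMono (idx : Fin l → ℕ) : StrictMono (pos idx) := by
  intro i i' h
  have := cnt_mono' idx h.le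
  simp only [pos]
  have : i + 1 ≤ i' := h
  nlinarith [cnt_mono' idx h.le]

theorem pos_mono (idx : Fin l → ℕ) {i i' : ℕ} (h : i ≤ i') : pos idx i ≤ pos idx i' := by
  rcases eq_or_lt_of_le h with rfl | h
  · rfl
  · exact (pos_strictMono idx h).le

theorem pos_zero (idx : Fin l → ℕ) : pos idx 0 = 0 := by
  simp [pos, cnt]

theorem pos_succ_not {idx : Fin l → ℕ} {i : ℕ} (h : ∀ j, idx j ≠ i) :
    pos idx (i + 1) = pos idx i + 1 := by
  have : cnt idx (i + 1) = cnt idx i := by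
    unfold cnt
    congr 1
    apply Finset.filter_congr
    intro j _
    have := h j
    constructor <;> (intro; omega)
  simp [pos, this]
  omega

theorem pos_succ_mem {idx : Fin l → ℕ} (hinj : Function.Injective idx) {i : ℕ} {j : Fin l}
    (h : idx j = i) : pos idx (i + 1) = pos idx i + (m l + 1) := by
  have hset : Finset.univ.filter (fun j' => idx j' < i + 1)
      = insert j (Finset.univ.filter (fun j' => idx j' < i)) := by
    ext j'
    simp only [Finset.mem_filter, Finset.mem_univ, true_and, Finset.mem_insert]
    constructor
    · intro hj'
      rcases Nat.lt_or_ge (idx j') i with h' | h'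
      · exact Or.inr h'
      · have : idx j' = i := by omega
        exact Or.inl (hinj (this.trans h.symm))
    · rintro (rfl | h') <;> omega
  have hcnt : cnt idx (i + 1) = cnt idx i + 1 := by
    rw [cnt, hset, Finset.card_insert_of_notMem (by simp [h])]
    rfl
  simp [pos, hcnt]
  ring

theorem cnt_le (idx : Fin l → ℕ) (i : ℕ) : cnt idx i ≤ l := by
  have := Finset.card_le_card (Finset.filter_subset (fun j => idx j < i) Finset.univ)
  simpa [cnt] using this

theorem cnt_eq_l {idx : Fin l → ℕ} {i : ℕ} (h : ∀ j, idx j < i) : cnt idx i = l := by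
  rw [cnt, Finset.filter_true_of_mem (fun j _ => h j)]
  simp

theorem pos_last {idx : Fin l → ℕ} {b : ℕ} (hb : 1 ≤ b) (hlt : ∀ j, idx j + 1 < b) :
    pos idx (b - 1) = b - 1 + m l * l := by
  rw [pos, cnt_eq_l (fun j => by have := hlt j; omega)]

theorem decode {idx : Fin l → ℕ} {b : ℕ} (hinj : Function.Injective idx)
    (hb : 1 ≤ b) (hlt : ∀ j, idx j + 1 < b) {p : ℕ} (hp : p < b + m l * l) :
    (∃ i, i < b ∧ pos idx i = p) ∨
      (∃ j r, 1 ≤ r ∧ r ≤ m l ∧ pos idx (idx j) + r = p) := by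
  set P : ℕ → Prop := fun i => pos idx i ≤ p with hP
  have hP0 : P 0 := by simp [hP, pos_zero]
  set i := Nat.findGreatest P (b - 1) with hi
  have hile : i ≤ b - 1 := Nat.findGreatest_le _
  have hspec : P i := Nat.findGreatest_spec (Nat.zero_le _) hP0
  rcases eq_or_lt_of_le (hspec : pos idx i ≤ p) with heq | hlt'
  · exact Or.inl ⟨i, by omega, heq⟩
  rcases eq_or_lt_of_le hile with heq | hib
  · exfalso
    have := pos_last hb hlt
    rw [heq] at hlt'
    omega
  have hgr : ¬ P (i + 1) := Nat.findGreatest_is_greatest (by rw [← hi]; omega) (by omega)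
  have hgt : p < pos idx (i + 1) := by simpa [hP] using hgr
  by_cases hmem : ∃ j, idx j = i
  · obtain ⟨j, hj⟩ := hmem
    have := pos_succ_mem hinj hj
    refine Or.inr ⟨j, p - pos idx i, by omega, by omega, by rw [hj]; omega⟩
  · push_neg at hmem
    have := pos_succ_not hmem
    omega

theorem pos_ne_ins {idx : Fin l → ℕ} (hinj : Function.Injective idx) {i : ℕ} {j : Fin l}
    {r : ℕ} (hr1 : 1 ≤ r) (hrm : r ≤ m l) : pos idx i ≠ pos idx (idx j) + r := by
  rcases le_or_gt i (idx j) with h | h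
  · have := pos_mono idx h
    omega
  · have h1 : idx j + 1 ≤ i := h
    have := pos_mono idx h1
    have := pos_succ_mem hinj (rfl : idx j = idx j)
    omega

theorem ins_inj {idx : Fin l → ℕ} (hinj : Function.Injective idx) {j j' : Fin l}
    {r r' : ℕ} (hr1 : 1 ≤ r) (hrm : r ≤ m l) (hr1' : 1 ≤ r') (hrm' : r' ≤ m l)
    (h : pos idx (idx j) + r = pos idx (idx j') + r') : j = j' ∧ r = r' := by
  rcases lt_trichotomy (idx j) (idx j') with hlt | heq | hlt
  · exfalso
    have h1 : idx j + 1 ≤ idx j' := hlt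
    have := pos_mono idx h1
    have := pos_succ_mem hinj (rfl : idx j = idx j)
    omega
  · have hj : j = j' := hinj heq
    subst hj
    exact ⟨rfl, by omega⟩
  · exfalso
    have h1 : idx j' + 1 ≤ idx j := hlt
    have := pos_mono idx h1
    have := pos_succ_mem hinj (rfl : idx j' = idx j')
    omega

/-! ### Embedding old and new points, blocks of the expanded design. -/

def oldEmb (v l : ℕ) : Fin v ↪ Fin (v + l + 1) := Fin.castLEEmb (by omega)

def npVal {l : ℕ} (o : Option (ZMod l)) : ℕ := o.elim l ZMod.val

theorem npVal_none {l : ℕ} : npVal (none : Option (ZMod l)) = l := rfl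
theorem npVal_some {l : ℕ} (a : ZMod l) : npVal (some a) = a.val := rfl

def newPt (v l : ℕ) [NeZero l] : Option (ZMod l) ↪ Fin (v + l + 1) where
  toFun o := ⟨v + npVal o, by
    rcases o with _ | a
    · rw [npVal_none]; omega
    · rw [npVal_some]; have := ZMod.val_lt a; omega⟩
  inj' := by
    intro o o' h
    simp only [Fin.mk.injEq, Nat.add_right_cancel_iff] at h
    rcases o with _ | a <;> rcases o' with _ | a'
    · rfl
    · rw [npVal_none, npVal_some] at h; have := ZMod.val_lt a'; omega
    · rw [npVal_some, npVal_none] at h; have := ZMod.val_lt a; omega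
    · rw [npVal_some, npVal_some] at h
      exact congrArg some (ZMod.val_injective l (by omega))

variable {v : ℕ}

theorem oldEmb_val (x : Fin v) : ((oldEmb v l) x : ℕ) = (x : ℕ) := rfl

theorem newPt_ge [NeZero l] (o : Option (ZMod l)) : v ≤ ((newPt v l) o : ℕ) :=
  Nat.le_add_right _ _

theorem mem_old_lt {S : Finset (Fin v)} {z : Fin (v + l + 1)}
    (h : z ∈ S.map (oldEmb v l)) : (z : ℕ) < v := by
  obtain ⟨x, -, rfl⟩ := Finset.mem_map.mp h
  exact x.isLt

theorem mem_new_ge [NeZero l] {E : Finset (Option (ZMod l))} {z : Fin (v + l + 1)}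
    (h : z ∈ E.map (newPt v l)) : v ≤ (z : ℕ) := by
  obtain ⟨o, -, rfl⟩ := Finset.mem_map.mp h
  exact newPt_ge o

theorem disj_old_new [NeZero l] (S : Finset (Fin v)) (E : Finset (Option (ZMod l))) :
    Disjoint (S.map (oldEmb v l)) (E.map (newPt v l)) := by
  rw [Finset.disjoint_left]
  intro z hz hz'
  exact absurd (mem_new_ge hz') (by simpa using mem_old_lt hz)

theorem newPt_notin_lift [NeZero l] (S : Finset (Fin v)) (o : Option (ZMod l)) :
    (newPt v l) o ∉ S.map (oldEmb v l) := by
  intro h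
  exact absurd (newPt_ge o) (by simpa using mem_old_lt h)

theorem oldEmb_notin_new [NeZero l] (E : Finset (Option (ZMod l))) (x : Fin v) :
    (oldEmb v l) x ∉ E.map (newPt v l) := by
  intro h
  have := mem_new_ge h
  rw [oldEmb_val] at this
  exact absurd x.isLt (by omega)

theorem z_cases [NeZero l] (z : Fin (v + l + 1)) :
    (∃ x : Fin v, z = (oldEmb v l) x) ∨ (∃ o, z = (newPt v l) o) := by
  rcases Nat.lt_or_ge (z : ℕ) v with h | h
  · exact Or.inl ⟨⟨z, h⟩, by apply Fin.ext; rfl⟩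
  · rcases Nat.lt_or_ge ((z : ℕ) - v) l with h2 | h2
    · refine Or.inr ⟨some (((z : ℕ) - v : ℕ) : ZMod l), ?_⟩
      apply Fin.ext
      show (z : ℕ) = v + npVal (some (((z : ℕ) - v : ℕ) : ZMod l))
      rw [npVal_some, ZMod.val_cast_of_lt h2]
      omega
    · refine Or.inr ⟨none, ?_⟩
      apply Fin.ext
      show (z : ℕ) = v + npVal (none : Option (ZMod l))
      rw [npVal_none]
      have := z.isLt
      omega

def insBlock (v l : ℕ) [NeZero l] (U : Fin l → Finset (Fin v)) (j : Fin l) (r : ℕ) :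
    Finset (Fin (v + l + 1)) :=
  (U j).map (oldEmb v l) ∪ (edge l (((j : ℕ)) : ZMod l) r).map (newPt v l)

open Classical in
noncomputable def newB (v l b : ℕ) [NeZero l] (Bf : ℕ → Finset (Fin v))
    (U : Fin l → Finset (Fin v))
    (idx : Fin l → ℕ) (p : ℕ) : Finset (Fin (v + l + 1)) :=
  if h : ∃ i, i < b ∧ pos idx i = p then (Bf h.choose).map (oldEmb v l)
  else if h2 : ∃ x : Fin l × ℕ, 1 ≤ x.2 ∧ x.2 ≤ m l ∧ pos idx (idx x.1) + x.2 = p then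
    insBlock v l U h2.choose.1 (h2.choose.2 - 1)
  else ∅

theorem newB_at_pos [NeZero l] {b : ℕ} (Bf : ℕ → Finset (Fin v)) (U : Fin l → Finset (Fin v))
    {idx : Fin l → ℕ} {i : ℕ} (hi : i < b) :
    newB v l b Bf U idx (pos idx i) = (Bf i).map (oldEmb v l) := by
  have h : ∃ i', i' < b ∧ pos idx i' = pos idx i := ⟨i, hi, rfl⟩
  rw [newB, dif_pos h]
  have hspec := h.choose_spec
  have : h.choose = i := (pos_strictMono idx).injective hspec.2
  rw [this]

theorem newB_at_ins [NeZero l] {b : ℕ} (Bf : ℕ → Finset (Fin v)) (U : Fin l → Finset (Fin v))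
    {idx : Fin l → ℕ} (hinj : Function.Injective idx) {j : Fin l} {r : ℕ}
    (hr1 : 1 ≤ r) (hrm : r ≤ m l) :
    newB v l b Bf U idx (pos idx (idx j) + r) = insBlock v l U j (r - 1) := by
  have h : ¬ ∃ i', i' < b ∧ pos idx i' = pos idx (idx j) + r := by
    rintro ⟨i', -, hi'⟩
    exact pos_ne_ins hinj hr1 hrm hi'
  rw [newB, dif_neg h]
  have h2 : ∃ x : Fin l × ℕ, 1 ≤ x.2 ∧ x.2 ≤ m l ∧
      pos idx (idx x.1) + x.2 = pos idx (idx j) + r := ⟨(j, r), hr1, hrm, rfl⟩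
  rw [dif_pos h2]
  have hspec := h2.choose_spec
  obtain ⟨hj, hr⟩ := ins_inj hinj hspec.1 hspec.2.1 hr1 hrm hspec.2.2
  rw [hj, hr]

theorem choose2_mul (n : ℕ) : n.choose 2 * 2 = n * (n - 1) := by
  rw [Nat.choose_two_right]
  rcases Nat.eq_zero_or_pos n with rfl | hn
  · simp
  · have : Even (n * (n - 1)) := by
      have := Nat.even_mul_succ_self (n - 1)
      have hn1 : n - 1 + 1 = n := by omega
      rwa [hn1, Nat.mul_comm] at this
    obtain ⟨c, hc⟩ := this
    omega

end ESR
theorem expansion_set_recursion (v k b l : ℕ) (hk : 3 ≤ k)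
    (hdvd : (k - 2) ∣ v) (hl : l = v / (k - 2)) (hodd : Odd l)
    (D : DCCD v k b) (idx : Fin l → ℕ)
    (hlt : ∀ j, idx j + 1 < b)
    (hpart : ∀ x : Fin v, ∃! j : Fin l, x ∈ D.B (idx j) ∩ D.B (idx j + 1)) :
    ∃ D' : DCCD (v + l + 1) k (b + (v / (k - 2)) * ((v + k - 2) / (2 * k - 4))),
      (D.IsTight → D'.IsTight) ∧
      (D.IsCircular → D'.IsCircular) ∧
      (D.IsEconomical → D'.IsEconomical) := by
  classical
  obtain ⟨t, hlt2⟩ := hodd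
  have hodd' : Odd l := ⟨t, hlt2⟩
  haveI : NeZero l := ⟨by omega⟩
  have hm2 : 2 * ESR.m l = l + 1 := ESR.two_mul_m hodd'
  have hl1 : 1 ≤ l := by omega
  have hm1 : 1 ≤ ESR.m l := by omega
  have hb2 : 2 ≤ b := by have := hlt ⟨0, hl1⟩; omega
  have hk2 : 2 ≤ k := by omega
  have hveq : v = l * (k - 2) := by
    rw [hl, Nat.div_mul_cancel hdvd]
  have hkv : k ≤ v := by
    have h1 := D.card_block 0 (by omega)
    have h2 : (D.B 0).card ≤ (Finset.univ : Finset (Fin v)).card :=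
      Finset.card_le_card (Finset.subset_univ _)
    rw [h1, Finset.card_univ, Fintype.card_fin] at h2
    exact h2
  set mm := ESR.m l with hmm
  have hbeq : b + (v / (k - 2)) * ((v + k - 2) / (2 * k - 4)) = b + l * mm := by
    congr 1
    rw [← hl]
    congr 1
    have h1 : v + k - 2 = (l + 1) * (k - 2) := by
      have : (l + 1) * (k - 2) = l * (k - 2) + (k - 2) := by ring
      omega
    have h2 : 2 * k - 4 = 2 * (k - 2) := by omega
    rw [h1, h2, Nat.mul_div_mul_right _ _ (show 0 < k - 2 by omega), hmm]
    rfl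
  rw [hbeq]
  set U : Fin l → Finset (Fin v) := fun j => D.B (idx j) ∩ D.B (idx j + 1) with hU
  have hUcard : ∀ j, (U j).card = k - 2 := fun j => D.double_change (idx j) (hlt j)
  have hUsub1 : ∀ j, U j ⊆ D.B (idx j) := fun j => Finset.inter_subset_left
  have hUsub2 : ∀ j, U j ⊆ D.B (idx j + 1) := fun j => Finset.inter_subset_right
  have hinj : Function.Injective idx := by
    intro j j' h
    obtain ⟨x, hx⟩ := Finset.card_pos.mp (show 0 < (U j).card by rw [hUcard]; omega)
    have hx' : x ∈ U j' := by
      have : U j' = D.B (idx j') ∩ D.B (idx j' + 1) := rfl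
      rw [this, ← h]
      exact hx
    obtain ⟨j₀, -, hu⟩ := hpart x
    exact (hu j hx).trans (hu j' hx').symm
  set N := b + l * mm with hN
  have hcomm : ESR.m l * l = l * mm := by rw [hmm]; ring
  have hposlast : ESR.pos idx (b - 1) = N - 1 := by
    rw [ESR.pos_last (by omega) hlt]; omega
  have hposN : ∀ i, i < b → ESR.pos idx i < N := by
    intro i hi
    have := ESR.pos_mono idx (show i ≤ b - 1 by omega)
    omega
  have hinsN : ∀ (j : Fin l) (r : ℕ), 1 ≤ r → r ≤ mm → ESR.pos idx (idx j) + r < N := by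
    intro j r h1 h2
    have hs := ESR.pos_succ_mem hinj (rfl : idx j = idx j)
    have hle : idx j + 1 ≤ b - 1 := by have := hlt j; omega
    have := ESR.pos_mono idx hle
    omega
  set B' := ESR.newB v l b D.B U idx with hB'
  -- membership helpers
  have hmem_ins_old : ∀ (j : Fin l) (r : ℕ) (x : Fin v),
      (ESR.oldEmb v l) x ∈ ESR.insBlock v l U j r ↔ x ∈ U j := by
    intro j r x
    rw [ESR.insBlock, Finset.mem_union]
    constructor
    · rintro (h | h)
      · exact (Finset.mem_map' _).mp h
      · exact absurd h (ESR.oldEmb_notin_new _ _)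
    · intro h; exact Or.inl ((Finset.mem_map' _).mpr h)
  have hmem_ins_new : ∀ (j : Fin l) (r : ℕ) (o : Option (ZMod l)),
      (ESR.newPt v l) o ∈ ESR.insBlock v l U j r ↔ o ∈ ESR.edge l (((j : ℕ)) : ZMod l) r := by
    intro j r o
    rw [ESR.insBlock, Finset.mem_union]
    constructor
    · rintro (h | h)
      · exact absurd h (ESR.newPt_notin_lift _ _)
      · exact (Finset.mem_map' _).mp h
    · intro h; exact Or.inr ((Finset.mem_map' _).mpr h)
  have hcap_lift_ins : ∀ (S : Finset (Fin v)) (j : Fin l) (r : ℕ), U j ⊆ S →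
      S.map (ESR.oldEmb v l) ∩ ESR.insBlock v l U j r = (U j).map (ESR.oldEmb v l) := by
    intro S j r hsub
    ext z
    simp only [Finset.mem_inter, ESR.insBlock, Finset.mem_union]
    constructor
    · rintro ⟨hS, h | h⟩
      · exact h
      · exact absurd h (Finset.disjoint_left.mp (ESR.disj_old_new S _) hS)
    · intro h
      exact ⟨Finset.map_subset_map.mpr hsub h, Or.inl h⟩
  have hcap_ins_ins : ∀ (j : Fin l) (r r' : ℕ), r < mm → r' < mm → r ≠ r' →
      ESR.insBlock v l U j r ∩ ESR.insBlock v l U j r' = (U j).map (ESR.oldEmb v l) := by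
    intro j r r' hr hr' hne
    ext z
    simp only [Finset.mem_inter, ESR.insBlock, Finset.mem_union]
    constructor
    · rintro ⟨h1 | h1, h2 | h2⟩
      · exact h1
      · exact h1
      · exact h2
      · exfalso
        obtain ⟨o, ho, rfl⟩ := Finset.mem_map.mp h1
        obtain ⟨o', ho', heq⟩ := Finset.mem_map.mp h2
        have : o' = o := (ESR.newPt v l).injective heq
        subst this
        have e1 := ESR.eq_ridx_of_mem hodd' hr ho
        have e2 := ESR.eq_ridx_of_mem hodd' hr' ho'
        omega
    · intro h
      exact ⟨Or.inl h, Or.inl h⟩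
  have hins_card : ∀ (j : Fin l) (r : ℕ), r < mm → (ESR.insBlock v l U j r).card = k := by
    intro j r hr
    rw [ESR.insBlock, Finset.card_union_of_disjoint (ESR.disj_old_new _ _),
      Finset.card_map, Finset.card_map, hUcard, ESR.edge_card hodd' _ hr]
    omega
  -- predecessor descriptions
  have hpred_pos : ∀ i, 1 ≤ i → i < b →
      (∃ j : Fin l, idx j = i - 1 ∧
        B' (ESR.pos idx i - 1) = ESR.insBlock v l U j (mm - 1)) ∨
      ((∀ j, idx j ≠ i - 1) ∧
        B' (ESR.pos idx i - 1) = (D.B (i - 1)).map (ESR.oldEmb v l)) := by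
    intro i h1 hib
    have hi1 : i - 1 + 1 = i := by omega
    by_cases hmem : ∃ j : Fin l, idx j = i - 1
    · obtain ⟨j, hj⟩ := hmem
      left
      have hs := ESR.pos_succ_mem hinj hj
      rw [hi1] at hs
      have heq : ESR.pos idx i - 1 = ESR.pos idx (idx j) + mm := by rw [hj]; omega
      refine ⟨j, hj, ?_⟩
      rw [heq, hB']
      exact ESR.newB_at_ins D.B U hinj hm1 le_rfl
    · push_neg at hmem
      right
      have hs := ESR.pos_succ_not hmem
      rw [hi1] at hs
      have heq : ESR.pos idx i - 1 = ESR.pos idx (i - 1) := by omega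
      refine ⟨hmem, ?_⟩
      rw [heq, hB']
      exact ESR.newB_at_pos D.B U (by omega)
  have hpred_ins : ∀ (j : Fin l) (r : ℕ), 2 ≤ r → r ≤ mm →
      B' (ESR.pos idx (idx j) + r - 1) = ESR.insBlock v l U j (r - 2) := by
    intro j r h2 hmr
    have heq : ESR.pos idx (idx j) + r - 1 = ESR.pos idx (idx j) + (r - 1) := by omega
    rw [heq, hB', ESR.newB_at_ins D.B U hinj (by omega) (by omega)]
    congr 1
  have hpred_ins1 : ∀ (j : Fin l),
      B' (ESR.pos idx (idx j) + 1 - 1) = (D.B (idx j)).map (ESR.oldEmb v l) := by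
    intro j
    have heq : ESR.pos idx (idx j) + 1 - 1 = ESR.pos idx (idx j) := by omega
    rw [heq, hB']
    exact ESR.newB_at_pos D.B U (by have := hlt j; omega)
  -- structure fields
  have hcard_block : ∀ p, p < N → (B' p).card = k := by
    intro p hp
    rcases ESR.decode hinj (by omega) hlt (show p < b + ESR.m l * l by omega) with
      ⟨i, hib, hpe⟩ | ⟨j, r, h1, h2, hpe⟩
    · rw [← hpe, hB', ESR.newB_at_pos D.B U hib, Finset.card_map]
      exact D.card_block i hib
    · rw [← hpe, hB', ESR.newB_at_ins D.B U hinj h1 h2]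
      exact hins_card j (r - 1) (by omega)
  have hdouble : ∀ p, p + 1 < N → (B' p ∩ B' (p + 1)).card = k - 2 := by
    intro p hp
    rcases ESR.decode hinj (by omega) hlt (show p < b + ESR.m l * l by omega) with
      ⟨i, hib, hpe⟩ | ⟨j, r, h1, h2, hpe⟩
    · have hib1 : i < b - 1 := by
        rcases Nat.lt_or_ge i (b - 1) with h | h
        · exact h
        · exfalso
          have : i = b - 1 := by omega
          rw [this, hposlast] at hpe
          omega
      by_cases hmem : ∃ j : Fin l, idx j = i
      · obtain ⟨j, hj⟩ := hmem
        have hp1 : p + 1 = ESR.pos idx (idx j) + 1 := by rw [hj, hpe]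
        rw [hp1, ← hpe, hB', ESR.newB_at_pos D.B U hib,
          ESR.newB_at_ins D.B U hinj le_rfl hm1]
        rw [hcap_lift_ins _ j _ (by rw [← hj]; exact hUsub1 j), Finset.card_map]
        exact hUcard j
      · push_neg at hmem
        have hp1 : p + 1 = ESR.pos idx (i + 1) := by rw [ESR.pos_succ_not hmem]; omega
        rw [hp1, ← hpe, hB', ESR.newB_at_pos D.B U hib, ESR.newB_at_pos D.B U (by omega),
          ← Finset.map_inter, Finset.card_map]
        exact D.double_change i (by omega)
    · rcases eq_or_lt_of_le h2 with heq | hmlt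
      · -- r = mm
        have hs := ESR.pos_succ_mem hinj (rfl : idx j = idx j)
        have hp1 : p + 1 = ESR.pos idx (idx j + 1) := by omega
        rw [hp1, ← hpe, hB', ESR.newB_at_ins D.B U hinj h1 h2,
          ESR.newB_at_pos D.B U (hlt j), Finset.inter_comm,
          hcap_lift_ins _ j _ (hUsub2 j), Finset.card_map]
        exact hUcard j
      · have hp1 : p + 1 = ESR.pos idx (idx j) + (r + 1) := by omega
        rw [hp1, ← hpe, hB', ESR.newB_at_ins D.B U hinj h1 h2,
          ESR.newB_at_ins D.B U hinj (by omega) (by omega)]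
        have : r + 1 - 1 = r := by omega
        rw [this, hcap_ins_ins j (r - 1) r (by omega) (by omega) (by omega), Finset.card_map]
        exact hUcard j
  -- covering pairs
  have hmix : ∀ (x : Fin v) (o : Option (ZMod l)), ∃ p, p < N ∧
      (ESR.oldEmb v l) x ∈ B' p ∧ (ESR.newPt v l) o ∈ B' p := by
    intro x o
    obtain ⟨j₀, hj₀, -⟩ := hpart x
    have hrm : ESR.ridx (((j₀ : ℕ)) : ZMod l) o < mm := ESR.ridx_lt hodd' _ o
    set r₀ := ESR.ridx (((j₀ : ℕ)) : ZMod l) o with hr₀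
    refine ⟨ESR.pos idx (idx j₀) + (r₀ + 1), hinsN j₀ (r₀ + 1) (by omega) (by omega), ?_, ?_⟩
    · rw [hB', ESR.newB_at_ins D.B U hinj (by omega) (by omega), Nat.add_sub_cancel,
        hmem_ins_old]
      exact hj₀
    · rw [hB', ESR.newB_at_ins D.B U hinj (by omega) (by omega), Nat.add_sub_cancel,
        hmem_ins_new]
      exact ESR.mem_edge_ridx _ o
  have hcover : ∀ T : Finset (Fin (v + l + 1)), T.card = 2 → ∃ p, p < N ∧ T ⊆ B' p := by
    intro T hT
    obtain ⟨z₁, z₂, hzne, rfl⟩ := Finset.card_eq_two.mp hT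
    have main : ∃ p, p < N ∧ z₁ ∈ B' p ∧ z₂ ∈ B' p := by
      rcases ESR.z_cases z₁ with ⟨x₁, rfl⟩ | ⟨o₁, rfl⟩ <;>
        rcases ESR.z_cases z₂ with ⟨x₂, rfl⟩ | ⟨o₂, rfl⟩
      · have hxne : x₁ ≠ x₂ := fun h => hzne (by rw [h])
        obtain ⟨i, hib, hsub⟩ := D.cover {x₁, x₂} (Finset.card_pair hxne)
        refine ⟨ESR.pos idx i, hposN i hib, ?_, ?_⟩ <;>
          · rw [hB', ESR.newB_at_pos D.B U hib, Finset.mem_map']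
            apply hsub
            simp
      · exact hmix x₁ o₂
      · obtain ⟨p, h1, h2, h3⟩ := hmix x₂ o₁
        exact ⟨p, h1, h3, h2⟩
      · have hone : o₁ ≠ o₂ := fun h => hzne (by rw [h])
        obtain ⟨⟨jz, r₀⟩, ⟨hrm, ho₁, ho₂⟩, -⟩ := ESR.pair_unique hodd' hone
        set j : Fin l := ⟨jz.val, ZMod.val_lt jz⟩ with hjdef
        have hzj : (((j : ℕ)) : ZMod l) = jz := ZMod.natCast_zmod_val jz
        refine ⟨ESR.pos idx (idx j) + (r₀ + 1), hinsN j _ (by omega) (by omega), ?_, ?_⟩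
        · rw [hB', ESR.newB_at_ins D.B U hinj (by omega) (by omega), Nat.add_sub_cancel,
            hmem_ins_new, hzj]
          exact ho₁
        · rw [hB', ESR.newB_at_ins D.B U hinj (by omega) (by omega), Nat.add_sub_cancel,
            hmem_ins_new, hzj]
          exact ho₂
    obtain ⟨p, h1, h2, h3⟩ := main
    exact ⟨p, h1, Finset.insert_subset h2 (Finset.singleton_subset_iff.mpr h3)⟩
  refine ⟨⟨B', by omega, hcard_block, hdouble, fun T hT => ?_⟩, ?_, ?_, ?_⟩
  · obtain ⟨p, h1, h2⟩ := hcover T hT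
    exact ⟨p, h1, h2⟩
  · -- tight
    intro hT T hT2
    obtain ⟨z₁, z₂, hzne, rfl⟩ := Finset.card_eq_two.mp hT2
    have htmix : ∀ (x : Fin v) (o : Option (ZMod l)),
        ∃! p, p < N ∧
          ({(ESR.oldEmb v l) x, (ESR.newPt v l) o} : Finset (Fin (v + l + 1))) ⊆ B' p ∧
          ∃ z ∈ ({(ESR.oldEmb v l) x, (ESR.newPt v l) o} : Finset (Fin (v + l + 1))),
            p = 0 ∨ z ∉ B' (p - 1) := by
      intro x o
      obtain ⟨j₀, hj₀, hju⟩ := hpart x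
      have hrm : ESR.ridx (((j₀ : ℕ)) : ZMod l) o < mm := ESR.ridx_lt hodd' _ o
      set r₀ := ESR.ridx (((j₀ : ℕ)) : ZMod l) o with hr₀def
      have hoe : o ∈ ESR.edge l (((j₀ : ℕ)) : ZMod l) r₀ := ESR.mem_edge_ridx _ o
      have hblk : B' (ESR.pos idx (idx j₀) + (r₀ + 1)) = ESR.insBlock v l U j₀ r₀ := by
        rw [hB', ESR.newB_at_ins D.B U hinj (by omega) (by omega), Nat.add_sub_cancel]
      refine ⟨ESR.pos idx (idx j₀) + (r₀ + 1), ⟨hinsN _ _ (by omega) (by omega), ?_, ?_⟩, ?_⟩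
      · rw [hblk]
        intro z hz
        simp only [Finset.mem_insert, Finset.mem_singleton] at hz
        rcases hz with rfl | rfl
        · rw [hmem_ins_old]; exact hj₀
        · rw [hmem_ins_new]; exact hoe
      · refine ⟨(ESR.newPt v l) o, by simp, Or.inr ?_⟩
        intro hmem
        rcases Nat.eq_zero_or_pos r₀ with h0 | hp1
        · rw [h0] at hmem
          rw [hpred_ins1 j₀] at hmem
          exact ESR.newPt_notin_lift _ o hmem
        · rw [hpred_ins j₀ (r₀ + 1) (by omega) (by omega), hmem_ins_new] at hmem
          have := ESR.eq_ridx_of_mem hodd' (show r₀ + 1 - 2 < mm by omega) hmem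
          omega
      · rintro q ⟨hqN, hqsub, z, hzT, hzintro⟩
        rcases ESR.decode hinj (by omega) hlt (show q < b + ESR.m l * l by omega) with
          ⟨i, hib, hpe⟩ | ⟨j, r, h1, h2, hpe⟩
        · exfalso
          rw [← hpe, hB', ESR.newB_at_pos D.B U hib] at hqsub
          exact ESR.newPt_notin_lift _ o (hqsub (by simp))
        · rw [← hpe, hB', ESR.newB_at_ins D.B U hinj h1 h2] at hqsub
          have hxU : x ∈ U j := by
            have := hqsub (show (ESR.oldEmb v l) x ∈ _ by simp)
            rwa [hmem_ins_old] at this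
          have hjj : j = j₀ := hju j hxU
          have hoej : o ∈ ESR.edge l (((j₀ : ℕ)) : ZMod l) (r - 1) := by
            have := hqsub (show (ESR.newPt v l) o ∈ _ by simp)
            rw [hmem_ins_new] at this
            rwa [hjj] at this
          have hre := ESR.eq_ridx_of_mem hodd' (show r - 1 < mm by omega) hoej
          rw [← hpe, hjj]
          omega
    show ∃! p, p < N ∧ ({z₁, z₂} : Finset (Fin (v + l + 1))) ⊆ B' p ∧
      ∃ z ∈ ({z₁, z₂} : Finset (Fin (v + l + 1))), p = 0 ∨ z ∉ B' (p - 1)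
    rcases ESR.z_cases z₁ with ⟨x₁, rfl⟩ | ⟨o₁, rfl⟩ <;>
      rcases ESR.z_cases z₂ with ⟨x₂, rfl⟩ | ⟨o₂, rfl⟩
    · -- old-old
      have hxne : x₁ ≠ x₂ := fun h => hzne (by rw [h])
      obtain ⟨i₀, hc₀, hu₀⟩ := hT {x₁, x₂} (Finset.card_pair hxne)
      obtain ⟨hi₀b, hsub₀, x₀, hx₀T, hintro₀⟩ := hc₀
      have hblk0 : B' (ESR.pos idx i₀) = (D.B i₀).map (ESR.oldEmb v l) := by
        rw [hB']; exact ESR.newB_at_pos D.B U hi₀b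
      refine ⟨ESR.pos idx i₀, ⟨hposN _ hi₀b, ?_, ?_⟩, ?_⟩
      · rw [hblk0]
        intro z hz
        simp only [Finset.mem_insert, Finset.mem_singleton] at hz
        rcases hz with rfl | rfl <;> · rw [Finset.mem_map']; apply hsub₀; simp
      · refine ⟨(ESR.oldEmb v l) x₀, ?_, ?_⟩
        · simp only [Finset.mem_insert, Finset.mem_singleton] at hx₀T ⊢
          rcases hx₀T with rfl | rfl
          · left; rfl
          · right; rfl
        · by_cases hi0 : i₀ = 0
          · left; rw [hi0, ESR.pos_zero]
          · right
            have hnot : x₀ ∉ D.B (i₀ - 1) := by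
              rcases hintro₀ with h | h
              · exact absurd h hi0
              · exact h
            rcases hpred_pos i₀ (by omega) hi₀b with ⟨j, hj, hpe2⟩ | ⟨-, hpe2⟩
            · rw [hpe2, hmem_ins_old]
              intro hxin
              exact hnot (by rw [← hj]; exact hUsub1 j hxin)
            · rw [hpe2, Finset.mem_map']
              exact hnot
      · rintro q ⟨hqN, hqsub, z, hzT, hzintro⟩
        rcases ESR.decode hinj (by omega) hlt (show q < b + ESR.m l * l by omega) with
          ⟨i, hib, hpe⟩ | ⟨j, r, h1, h2, hpe⟩
        · rw [← hpe] at hqsub hzintro ⊢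
          have hblk : B' (ESR.pos idx i) = (D.B i).map (ESR.oldEmb v l) := by
            rw [hB']; exact ESR.newB_at_pos D.B U hib
          rw [hblk] at hqsub
          have hx1 : x₁ ∈ D.B i := (Finset.mem_map' _).mp (hqsub (by simp))
          have hx2 : x₂ ∈ D.B i := (Finset.mem_map' _).mp (hqsub (by simp))
          have hz' : ∃ x₀', (x₀' = x₁ ∨ x₀' = x₂) ∧ z = (ESR.oldEmb v l) x₀' := by
            simp only [Finset.mem_insert, Finset.mem_singleton] at hzT
            rcases hzT with rfl | rfl
            · exact ⟨x₁, Or.inl rfl, rfl⟩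
            · exact ⟨x₂, Or.inr rfl, rfl⟩
          obtain ⟨x₀', hor, rfl⟩ := hz'
          have hx₀'Bi : x₀' ∈ D.B i := by rcases hor with rfl | rfl <;> assumption
          have hcov : D.CoveredAt {x₁, x₂} i := by
            refine ⟨hib, ?_, x₀', by rcases hor with rfl | rfl <;> simp, ?_⟩
            · intro y hy
              simp only [Finset.mem_insert, Finset.mem_singleton] at hy
              rcases hy with rfl | rfl <;> assumption
            · by_cases hi0 : i = 0
              · exact Or.inl hi0
              · right
                have hq0 : ESR.pos idx i ≠ 0 := by
                  intro h
                  exact hi0 ((ESR.pos_strictMono idx).injective (h.trans (ESR.pos_zero idx).symm))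
                rcases hzintro with h | hznot
                · exact absurd h hq0
                · intro hxin
                  apply hznot
                  rcases hpred_pos i (by omega) hib with ⟨j, hj, hpe2⟩ | ⟨-, hpe2⟩
                  · rw [hpe2, hmem_ins_old]
                    show x₀' ∈ D.B (idx j) ∩ D.B (idx j + 1)
                    rw [hj, show i - 1 + 1 = i from by omega]
                    exact Finset.mem_inter.mpr ⟨hxin, hx₀'Bi⟩
                  · rw [hpe2, Finset.mem_map']
                    exact hxin
          rw [hu₀ i hcov]
        · exfalso
          have hblk : B' (ESR.pos idx (idx j) + r) = ESR.insBlock v l U j (r - 1) := by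
            rw [hB']; exact ESR.newB_at_ins D.B U hinj h1 h2
          rw [← hpe] at hqsub hzintro
          rw [hblk] at hqsub
          have hz' : ∃ x₀', (x₀' = x₁ ∨ x₀' = x₂) ∧ z = (ESR.oldEmb v l) x₀' := by
            simp only [Finset.mem_insert, Finset.mem_singleton] at hzT
            rcases hzT with rfl | rfl
            · exact ⟨x₁, Or.inl rfl, rfl⟩
            · exact ⟨x₂, Or.inr rfl, rfl⟩
          obtain ⟨x₀', hor, rfl⟩ := hz'
          have hx₀U : x₀' ∈ U j := by
            have : (ESR.oldEmb v l) x₀' ∈ ESR.insBlock v l U j (r - 1) :=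
              hqsub (by rcases hor with rfl | rfl <;> simp)
            rwa [hmem_ins_old] at this
          rcases hzintro with h | hznot
          · omega
          · apply hznot
            rcases eq_or_lt_of_le h1 with h1e | h1lt
            · rw [← h1e, hpred_ins1 j, Finset.mem_map']
              exact hUsub1 j hx₀U
            · rw [hpred_ins j r (by omega) h2, hmem_ins_old]
              exact hx₀U
    · -- old-new
      exact htmix x₁ o₂
    · -- new-old
      rw [Finset.pair_comm]
      exact htmix x₂ o₁
    · -- new-new
      have hone : o₁ ≠ o₂ := fun h => hzne (by rw [h])
      obtain ⟨⟨jz, r₀⟩, ⟨hrm, ho₁, ho₂⟩, huq⟩ := ESR.pair_unique hodd' hone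
      set j : Fin l := ⟨jz.val, ZMod.val_lt jz⟩ with hjdef
      have hzj : (((j : ℕ)) : ZMod l) = jz := ZMod.natCast_zmod_val jz
      have hblk : B' (ESR.pos idx (idx j) + (r₀ + 1)) = ESR.insBlock v l U j r₀ := by
        rw [hB', ESR.newB_at_ins D.B U hinj (by omega) (by omega), Nat.add_sub_cancel]
      refine ⟨ESR.pos idx (idx j) + (r₀ + 1), ⟨hinsN _ _ (by omega) (by omega), ?_, ?_⟩, ?_⟩
      · rw [hblk]
        intro z hz
        simp only [Finset.mem_insert, Finset.mem_singleton] at hz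
        rcases hz with rfl | rfl
        · rw [hmem_ins_new, hzj]; exact ho₁
        · rw [hmem_ins_new, hzj]; exact ho₂
      · refine ⟨(ESR.newPt v l) o₁, by simp, Or.inr ?_⟩
        intro hmem
        rcases Nat.eq_zero_or_pos r₀ with h0 | hp1
        · rw [h0] at hmem
          rw [hpred_ins1 j] at hmem
          exact ESR.newPt_notin_lift _ o₁ hmem
        · rw [hpred_ins j (r₀ + 1) (by omega) (by omega), hmem_ins_new, hzj] at hmem
          have := ESR.eq_ridx_of_mem hodd' (show r₀ + 1 - 2 < mm by omega) hmem
          have hrid := ESR.eq_ridx_of_mem hodd' (show r₀ < ESR.m l from hrm)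
            (show o₁ ∈ ESR.edge l jz r₀ from ho₁)
          omega
      · rintro q ⟨hqN, hqsub, z, hzT, hzintro⟩
        rcases ESR.decode hinj (by omega) hlt (show q < b + ESR.m l * l by omega) with
          ⟨i, hib, hpe⟩ | ⟨j', r, h1, h2, hpe⟩
        · exfalso
          rw [← hpe, hB', ESR.newB_at_pos D.B U hib] at hqsub
          exact ESR.newPt_notin_lift _ o₁ (hqsub (by simp))
        · rw [← hpe, hB', ESR.newB_at_ins D.B U hinj h1 h2] at hqsub
          have ho₁' : o₁ ∈ ESR.edge l (((j' : ℕ)) : ZMod l) (r - 1) := by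
            have := hqsub (show (ESR.newPt v l) o₁ ∈ _ by simp)
            rwa [hmem_ins_new] at this
          have ho₂' : o₂ ∈ ESR.edge l (((j' : ℕ)) : ZMod l) (r - 1) := by
            have := hqsub (show (ESR.newPt v l) o₂ ∈ _ by simp)
            rwa [hmem_ins_new] at this
          have hcomb : ((((j' : ℕ)) : ZMod l), r - 1) = (jz, r₀) :=
            huq _ ⟨show r - 1 < ESR.m l from by omega, ho₁', ho₂'⟩
          have hjz : (((j' : ℕ)) : ZMod l) = jz := congrArg Prod.fst hcomb
          have hr : r - 1 = r₀ := congrArg Prod.snd hcomb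
          have hjj : j' = j := by
            apply Fin.ext
            have hv : (((j' : ℕ)) : ZMod l).val = (j' : ℕ) := ZMod.val_cast_of_lt j'.isLt
            rw [hjz] at hv
            show (j' : ℕ) = jz.val
            exact hv.symm
          rw [← hpe, hjj]
          omega
  · -- circular
    intro hC
    show (B' (N - 1) ∩ B' 0).card = k - 2
    have h0 : B' 0 = (D.B 0).map (ESR.oldEmb v l) := by
      have h := ESR.newB_at_pos (b := b) (idx := idx) D.B U (show 0 < b by omega)
      rw [ESR.pos_zero] at h
      rw [hB']
      exact h
    have hN1 : B' (N - 1) = (D.B (b - 1)).map (ESR.oldEmb v l) := by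
      rw [← hposlast, hB']
      exact ESR.newB_at_pos D.B U (by omega)
    rw [h0, hN1, ← Finset.map_inter, Finset.card_map]
    exact hC
  · -- economical
    intro hE
    rw [DCCD.IsEconomical] at hE ⊢
    have hchoose : (v + l + 1).choose 2 = v.choose 2 + (2 * k - 3) * (l * mm) := by
      have h1 := ESR.choose2_mul (v + l + 1)
      have h2 := ESR.choose2_mul v
      have hs1 : v + l + 1 - 1 = v + l := rfl
      rw [hs1] at h1
      have hveqZ : (v : ℤ) = (l : ℤ) * ((k : ℤ) - 2) := by
        have := hveq
        zify [hk2] at this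
        exact this
      have hmZ : 2 * (mm : ℤ) = (l : ℤ) + 1 := by
        have := hm2
        zify at this
        rw [hmm]
        exact this
      have key : (v + l + 1) * (v + l) = v * (v - 1) + (2 * k - 3) * (l * mm) * 2 := by
        zify [show 1 ≤ v by omega, show 3 ≤ 2 * k by omega]
        linear_combination (2 * ((l : ℤ) + 1)) * hveqZ - ((l : ℤ) * (2 * (k : ℤ) - 3)) * hmZ
      omega
    have hle : k.choose 2 ≤ v.choose 2 := Nat.choose_le_choose 2 hkv
    have h3 : 0 < 2 * k - 3 := by omega
    rw [hchoose]
    have hre : v.choose 2 + (2 * k - 3) * (l * mm) - k.choose 2 + (2 * k - 3) - 1 =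
        (v.choose 2 - k.choose 2 + (2 * k - 3) - 1) + (2 * k - 3) * (l * mm) := by omega
    rw [hre, Nat.add_mul_div_left _ _ h3]
    omega
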